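/- Let H be a group, X_H ⊆ H a subset, and n ≥ 1. Let W = (Fin n → H) ⋊ Sym(n) be the wreath product, the semidirect product in which σ ∈ Sym(n) acts on tuples by permuting coordinates. For h ∈ H and 1 ≤ i ≤ n write e_i(h) for the element of W whose tuple has h in slot i and 1 elsewhere and whose permutation is the identity, and for σ ∈ Sym(n) write p(σ) for the element with trivial tuple and permutation σ. Define, for 1 ≤ ℓ ≤ n, X_{2ℓ−1} = {e₁(h) : h ∈ X_H} ∪ {p((1 2)), p((2 3)), …, p((ℓ−1 ℓ))} and X_{2ℓ} = X_{2ℓ−1} ∪ {e_{ℓ+1}(h) : h ∈ H}, and define the coset leader sets CL(G_{2ℓ}/G_{2ℓ−1}) = {e_{ℓ+1}(h) : h ∈ H} and CL(G_{2ℓ+1}/G_{2ℓ}) = {p((j j+1 ⋯ ℓ+1)) : 1 ≤ j ≤ ℓ+1}. Then the Error Control Property holds at every step: (i) for every b ∈ X_{2ℓ} ∪ X_{2ℓ}⁻¹ and every c ∈ CL(G_{2ℓ}/G_{2ℓ−1}), either bc ∈ CL(G_{2ℓ}/G_{2ℓ−1}) or c⁻¹bc ∈ X_{2ℓ−1} ∪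 X_{2ℓ−1}⁻¹; and (ii) for every b ∈ X_{2ℓ+1} ∪ X_{2ℓ+1}⁻¹ and every c ∈ CL(G_{2ℓ+1}/G_{2ℓ}), either bc ∈ CL(G_{2ℓ+1}/G_{2ℓ}) or c⁻¹bc ∈ X_{2ℓ} ∪ X_{2ℓ}⁻¹. -/

import Mathlib

namespace GroupCode

/-- The action of `Sym(n)` on tuples `Fin n → H` by permuting coordinates:
`σ · (h₁, …, hₙ) = (h_{σ⁻¹(1)}, …, h_{σ⁻¹(n)})`. -/
def permAut (n : ℕ) (H : Type*) [Group H] :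
    Equiv.Perm (Fin n) →* MulAut (Fin n → H) where
  toFun σ :=
    { toFun := fun f => f ∘ σ.symm
      invFun := fun f => f ∘ σ
      left_inv := fun f => by ext i; simp
      right_inv := fun f => by ext i; simp
      map_mul' := fun f g => rfl }
  map_one' := by ext f i; rfl
  map_mul' := fun σ τ => by ext f i; rfl

/-- The wreath product `(Fin n → H) ⋊ Sym(n)`. -/
abbrev Wreath (n : ℕ) (H : Type*) [Group H] :=
  SemidirectProduct (Fin n → H) (Equiv.Perm (Fin n)) (permAut n H)

/-- `e_i(h)`: the element of the wreath product whose tuple has `h` in slot `i`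
and `1` elsewhere, and whose permutation is the identity. -/
def eSlot {n : ℕ} {H : Type*} [Group H] (i : Fin n) (h : H) : Wreath n H :=
  SemidirectProduct.inl (Pi.mulSingle i h)

/-- `p(σ)`: the element of the wreath product with trivial tuple and permutation `σ`. -/
def pPerm {n : ℕ} {H : Type*} [Group H] (σ : Equiv.Perm (Fin n)) : Wreath n H :=
  SemidirectProduct.inr σ

/-- The cycle `(j  j+1  ⋯  ℓ)` on `Fin n` (0-indexed), sending `j ↦ j+1 ↦ ⋯ ↦ ℓ ↦ j`. -/
def cyclePerm (n j ℓ : ℕ) : Equiv.Perm (Fin n) :=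
  ((List.finRange n).filter fun (i : Fin n) => decide (j ≤ (i : ℕ) ∧ (i : ℕ) ≤ ℓ)).formPerm

/-- The generating set `X_{2ℓ-1}` (for `1 ≤ ℓ ≤ n`, 1-indexed): `{e₁(h) : h ∈ X_H}`
together with the adjacent transpositions `(1 2), …, (ℓ−1 ℓ)`. -/
def Xodd {H : Type*} [Group H] (n : ℕ) (hn : 0 < n) (X_H : Set H) (ℓ : ℕ) :
    Set (Wreath n H) :=
  {w | ∃ h ∈ X_H, w = eSlot (⟨0, hn⟩ : Fin n) h} ∪
    {w | ∃ a b : Fin n, (b : ℕ) = (a : ℕ) + 1 ∧ (b : ℕ) < ℓ ∧ w = pPerm (Equiv.swap a b)}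

/-- The generating set `X_{2ℓ}` (for `1 ≤ ℓ ≤ n−1`, 1-indexed):
`X_{2ℓ−1} ∪ {e_{ℓ+1}(h) : h ∈ H}`. -/
def Xeven {H : Type*} [Group H] (n : ℕ) (hn : 0 < n) (X_H : Set H) (ℓ : ℕ) (hℓ : ℓ < n) :
    Set (Wreath n H) :=
  Xodd n hn X_H ℓ ∪ {w | ∃ h : H, w = eSlot (⟨ℓ, hℓ⟩ : Fin n) h}

/-- The coset leaders `CL(G_{2ℓ}/G_{2ℓ−1}) = {e_{ℓ+1}(h) : h ∈ H}` (1-indexed). -/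
def CLeven {H : Type*} [Group H] (n : ℕ) (ℓ : ℕ) (hℓ : ℓ < n) : Set (Wreath n H) :=
  {w | ∃ h : H, w = eSlot (⟨ℓ, hℓ⟩ : Fin n) h}

/-- The coset leaders `CL(G_{2ℓ+1}/G_{2ℓ}) = {p((j  j+1 ⋯ ℓ+1)) : 1 ≤ j ≤ ℓ+1}`
(1-indexed); 0-indexed these are the cycles on `{j, …, ℓ}` for `0 ≤ j ≤ ℓ`. -/
def CLodd {H : Type*} [Group H] (n : ℕ) (ℓ : ℕ) : Set (Wreath n H) :=
  {w | ∃ j ≤ ℓ, w = pPerm (cyclePerm n j ℓ)}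

variable {H : Type*} [Group H] {n : ℕ}


lemma eSlot_mul (i : Fin n) (h h' : H) : eSlot i h * eSlot i h' = eSlot i (h * h') := by
  simp [eSlot, ← map_mul, ← Pi.mulSingle_mul]

lemma eSlot_inv (i : Fin n) (h : H) : (eSlot i h)⁻¹ = eSlot i h⁻¹ := by
  rw [eSlot, eSlot, Pi.mulSingle_inv, map_inv]

lemma pPerm_inv (σ : Equiv.Perm (Fin n)) : (pPerm (H := H) σ)⁻¹ = pPerm σ⁻¹ :=
  (map_inv SemidirectProduct.inr σ).symm

lemma pPerm_mul (σ τ : Equiv.Perm (Fin n)) :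
    pPerm (H := H) σ * pPerm τ = pPerm (σ * τ) :=
  (map_mul SemidirectProduct.inr σ τ).symm

lemma permAut_mulSingle (σ : Equiv.Perm (Fin n)) (i : Fin n) (h : H) :
    permAut n H σ (Pi.mulSingle i h) = Pi.mulSingle (σ i) h := by
  have h0 : (permAut n H σ) (Pi.mulSingle i h) = Pi.mulSingle i h ∘ σ.symm := rfl
  rw [h0]
  funext x
  simp only [Function.comp_apply, Pi.mulSingle_apply]
  have : σ.symm x = i ↔ x = σ i := by
    rw [Equiv.symm_apply_eq, eq_comm]
  simp [this]

lemma conj_eSlot (σ : Equiv.Perm (Fin n)) (i : Fin n) (h : H) :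
    (pPerm (H := H) σ)⁻¹ * eSlot i h * pPerm σ = eSlot (σ⁻¹ i) h := by
  rw [pPerm_inv, pPerm, eSlot, eSlot, pPerm]
  rw [← SemidirectProduct.inl_aut_inv]
  congr 1
  rw [← map_inv, permAut_mulSingle]

lemma conj_pPerm (σ τ : Equiv.Perm (Fin n)) :
    (pPerm (H := H) σ)⁻¹ * pPerm τ * pPerm σ = pPerm (σ⁻¹ * τ * σ) := by
  rw [pPerm_inv, pPerm_mul, pPerm_mul]

lemma eSlot_commute {i j : Fin n} (hij : i ≠ j) (h h' : H) :
    Commute (eSlot i h) (eSlot j h') := by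
  unfold eSlot
  exact (Pi.mulSingle_commute hij h h').map (SemidirectProduct.inl (φ := permAut n H))

lemma pPerm_commute_eSlot {σ : Equiv.Perm (Fin n)} {i : Fin n} (hσ : σ i = i) (h : H) :
    Commute (pPerm σ) (eSlot i h) := by
  have h1 := SemidirectProduct.inl_aut (φ := permAut n H) σ (Pi.mulSingle i h)
  rw [permAut_mulSingle, hσ] at h1
  unfold Commute SemiconjBy pPerm eSlot
  conv_rhs => rw [h1]
  rw [mul_assoc, mul_assoc, ← map_mul]
  simp


lemma cycleList_map_val (n j ℓ : ℕ) (hℓ : ℓ < n) :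
    (((List.finRange n).filter fun (i : Fin n) => decide (j ≤ (i:ℕ) ∧ (i:ℕ) ≤ ℓ)).map Fin.val)
      = List.range' j (ℓ + 1 - j) := by
  have h1 : (((List.finRange n).filter fun (i : Fin n) => decide (j ≤ (i:ℕ) ∧ (i:ℕ) ≤ ℓ)).map Fin.val)
      = (List.range n).filter (fun k => decide (j ≤ k ∧ k ≤ ℓ)) := by
    rw [← List.map_coe_finRange_eq_range, List.filter_map]
    rfl
  rw [h1]
  refine (fun (p : List.Perm _ _) (s1 : List.Pairwise (· < ·) _) (s2 : List.Pairwise (· < ·) _) =>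
    List.Perm.eq_of_sortedLE s1.sortedLT.sortedLE s2.sortedLT.sortedLE p) ?_ ?_ ?_
  · rw [List.perm_ext_iff_of_nodup (List.nodup_range |>.filter _) List.nodup_range']
    intro k
    simp only [List.mem_filter, List.mem_range, List.mem_range'_1, decide_eq_true_eq]
    omega
  · exact List.pairwise_lt_range.sublist List.filter_sublist
  · exact List.pairwise_lt_range'

variable {n : ℕ}

lemma cyclePerm_apply {j ℓ : ℕ} (hj : j ≤ ℓ) (hℓ : ℓ < n) (i : Fin n) :
    cyclePerm n j ℓ i =
      if h : j ≤ (i:ℕ) ∧ (i:ℕ) ≤ ℓ then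
        (if h2 : (i:ℕ) = ℓ then ⟨j, by omega⟩ else ⟨(i:ℕ)+1, by omega⟩)
      else i := by
  set L := ((List.finRange n).filter fun (i : Fin n) => decide (j ≤ (i:ℕ) ∧ (i:ℕ) ≤ ℓ)) with hL
  have hcy : cyclePerm n j ℓ = L.formPerm := rfl
  have hmap : L.map Fin.val = List.range' j (ℓ+1-j) := cycleList_map_val n j ℓ hℓ
  have hlen : L.length = ℓ + 1 - j := by
    have := congrArg List.length hmap; simpa using this
  have hnodup : L.Nodup := by
    have h2 : (L.map Fin.val).Nodup := hmap ▸ List.nodup_range'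
    exact h2.of_map
  have hget : ∀ (k : ℕ) (hk : k < L.length), L[k] = (⟨j + k, by omega⟩ : Fin n) := by
    intro k hk
    apply Fin.ext
    have h3 : (L.map Fin.val)[k]'(by simpa using hk) = (L[k]).val := by simp
    rw [← h3]
    simp [hmap]
  by_cases hin : j ≤ (i:ℕ) ∧ (i:ℕ) ≤ ℓ
  · have hk : (i:ℕ) - j < L.length := by omega
    have hi : i = L[(i:ℕ)-j]'hk := by
      rw [hget _ hk]; apply Fin.ext; simp; try omega
    have hval : cyclePerm n j ℓ i =
        L[((i:ℕ)-j+1) % L.length]'(Nat.mod_lt _ (by omega)) := by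
      conv_lhs => rw [hcy, hi]
      exact List.formPerm_apply_getElem _ hnodup _ hk
    rw [hval, hget, dif_pos hin]
    split_ifs with hl
    · have hm : ((i:ℕ)-j+1) % L.length = 0 := by
        rw [hlen, show (i:ℕ)-j+1 = ℓ+1-j from by omega, Nat.mod_self]
      apply Fin.ext; simp [hm]
    · have hm : ((i:ℕ)-j+1) % L.length = (i:ℕ)-j+1 :=
        Nat.mod_eq_of_lt (by rw [hlen]; omega)
      apply Fin.ext; simp [hm]; omega
  · rw [dif_neg hin, hcy]
    apply List.formPerm_apply_of_notMem
    simp [hL, List.mem_filter]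
    intro h; omega

lemma cyclePerm_eq_one {ℓ : ℕ} (hℓ : ℓ < n) : cyclePerm n ℓ ℓ = 1 := by
  apply Equiv.ext
  intro i
  rw [cyclePerm_apply le_rfl hℓ]
  split_ifs with h1 h2
  · simp only [Equiv.Perm.one_apply]; apply Fin.ext; simp; try omega
  · omega
  · simp

lemma swap_cyclePerm {a ℓ : ℕ} (ha : a + 1 ≤ ℓ) (hℓ : ℓ < n) :
    Equiv.swap (⟨a, by omega⟩ : Fin n) ⟨a+1, by omega⟩ * cyclePerm n (a+1) ℓ
      = cyclePerm n a ℓ := by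
  apply Equiv.ext
  intro i
  rw [Equiv.Perm.mul_apply, cyclePerm_apply (by omega) hℓ, cyclePerm_apply (by omega) hℓ]
  rcases Nat.lt_or_ge (i:ℕ) a with h1 | h1
  · rw [dif_neg (by omega), dif_neg (by omega)]
    exact Equiv.swap_apply_of_ne_of_ne (by simp [Fin.ext_iff]; omega)
      (by simp [Fin.ext_iff]; omega)
  rcases Nat.eq_or_lt_of_le h1 with h2 | h2
  · -- i = a
    rw [dif_neg (by omega), dif_pos (by omega), dif_neg (by omega)]
    have hia : i = (⟨a, by omega⟩ : Fin n) := Fin.ext h2.symm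
    conv_lhs => rw [hia, Equiv.swap_apply_left]
    apply Fin.ext; simp; try omega
  rcases Nat.lt_or_ge (i:ℕ) (ℓ+1) with h3 | h3
  · rcases Nat.eq_or_lt_of_le (Nat.lt_succ_iff.mp h3) with h4 | h4
    · -- i = ℓ
      rw [dif_pos (by omega), dif_pos h4, dif_pos (by omega), dif_pos h4]
      rw [Equiv.swap_apply_right]
    · -- a+1 ≤ i < ℓ
      rw [dif_pos (by omega), dif_neg (by omega), dif_pos (by omega), dif_neg (by omega)]
      exact Equiv.swap_apply_of_ne_of_ne (by simp [Fin.ext_iff]; omega)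
        (by simp [Fin.ext_iff]; omega)
  · rw [dif_neg (by omega), dif_neg (by omega)]
    exact Equiv.swap_apply_of_ne_of_ne (by simp [Fin.ext_iff]; omega)
      (by simp [Fin.ext_iff]; omega)

lemma swap_cyclePerm' {a ℓ : ℕ} (ha : a + 1 ≤ ℓ) (hℓ : ℓ < n) :
    Equiv.swap (⟨a, by omega⟩ : Fin n) ⟨a+1, by omega⟩ * cyclePerm n a ℓ
      = cyclePerm n (a+1) ℓ := by
  rw [← swap_cyclePerm ha hℓ, ← mul_assoc, Equiv.swap_mul_self, one_mul]

lemma conj_swap (σ : Equiv.Perm (Fin n)) (x y : Fin n) :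
    σ⁻¹ * Equiv.swap x y * σ = Equiv.swap (σ⁻¹ x) (σ⁻¹ y) := by
  rw [Equiv.swap_apply_apply σ⁻¹ x y, inv_inv]


lemma conj_eq_self_of_commute {G : Type*} [Group G] {b c : G} (h : Commute b c) :
    c⁻¹ * b * c = b := by
  rw [mul_assoc, h.eq, ← mul_assoc]
  simp

end GroupCode

open GroupCode in
/-- **Proposition (Statement 13).** For the wreath product `(Fin n → H) ⋊ Sym(n)` with
the generating sets `X_k` and coset leader sets described above, the Error Control
Property holds at every step. -/
theorem wreath_error_control_property
    {H : Type*} [Group H] (X_H : Set H)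
    (n : ℕ) (hn : 0 < n) (ℓ : ℕ) (hℓ1 : 1 ≤ ℓ) (hℓn : ℓ ≤ n - 1) (hℓn' : ℓ < n) :
    (∀ b ∈ Xeven n hn X_H ℓ hℓn' ∪ (Xeven n hn X_H ℓ hℓn')⁻¹,
      ∀ c ∈ CLeven (H := H) n ℓ hℓn',
        b * c ∈ CLeven (H := H) n ℓ hℓn' ∨
          c⁻¹ * b * c ∈ Xodd n hn X_H ℓ ∪ (Xodd n hn X_H ℓ)⁻¹) ∧
    (∀ b ∈ Xodd n hn X_H (ℓ + 1) ∪ (Xodd n hn X_H (ℓ + 1))⁻¹,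
      ∀ c ∈ CLodd (H := H) n ℓ,
        b * c ∈ CLodd (H := H) n ℓ ∨
          c⁻¹ * b * c ∈ Xeven n hn X_H ℓ hℓn' ∪ (Xeven n hn X_H ℓ hℓn')⁻¹) := by
  constructor
  · -- Part (i)
    rintro b hb c ⟨g, rfl⟩
    have hne : (⟨0, hn⟩ : Fin n) ≠ ⟨ℓ, hℓn'⟩ := by simp [Fin.ext_iff]; omega
    -- normalize the shape of b
    have hshape :
        (∃ h : H, (h ∈ X_H ∨ h⁻¹ ∈ X_H) ∧ b = eSlot (⟨0, hn⟩ : Fin n) h) ∨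
        (∃ a b' : Fin n, (b' : ℕ) = (a : ℕ) + 1 ∧ (b' : ℕ) < ℓ ∧
            b = pPerm (Equiv.swap a b')) ∨
        (∃ h : H, b = eSlot (⟨ℓ, hℓn'⟩ : Fin n) h) := by
      rcases hb with hb | hb
      · rcases hb with (⟨h, hX, rfl⟩ | ⟨a, b', hab, hbl, rfl⟩) | ⟨h, rfl⟩
        · exact Or.inl ⟨h, Or.inl hX, rfl⟩
        · exact Or.inr (Or.inl ⟨a, b', hab, hbl, rfl⟩)
        · exact Or.inr (Or.inr ⟨h, rfl⟩)
      · rw [Set.mem_inv] at hb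
        rcases hb with (⟨h, hX, hb⟩ | ⟨a, b', hab, hbl, hb⟩) | ⟨h, hb⟩
        · exact Or.inl ⟨h⁻¹, Or.inr (by simpa using hX),
            by rw [← inv_inv b, hb, eSlot_inv]⟩
        · exact Or.inr (Or.inl ⟨a, b', hab, hbl,
            by rw [← inv_inv b, hb, pPerm_inv, Equiv.swap_inv]⟩)
        · exact Or.inr (Or.inr ⟨h⁻¹, by rw [← inv_inv b, hb, eSlot_inv]⟩)
    rcases hshape with ⟨h, hX, rfl⟩ | ⟨a, b', hab, hbl, rfl⟩ | ⟨h, rfl⟩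
    · right
      rw [conj_eq_self_of_commute (eSlot_commute hne h g)]
      rcases hX with hX | hX
      · exact Or.inl (Or.inl ⟨h, hX, rfl⟩)
      · refine Or.inr ?_
        rw [Set.mem_inv, eSlot_inv]
        exact Or.inl ⟨h⁻¹, hX, rfl⟩
    · right
      have hfix : Equiv.swap a b' (⟨ℓ, hℓn'⟩ : Fin n) = ⟨ℓ, hℓn'⟩ :=
        Equiv.swap_apply_of_ne_of_ne (by simp [Fin.ext_iff]; omega)
          (by simp [Fin.ext_iff]; omega)
      rw [conj_eq_self_of_commute (pPerm_commute_eSlot hfix g)]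
      exact Or.inl (Or.inr ⟨a, b', hab, hbl, rfl⟩)
    · left
      exact ⟨h * g, eSlot_mul _ _ _⟩
  · -- Part (ii)
    rintro b hb c ⟨j, hj, rfl⟩
    have hfix : ∀ x : Fin n, (x : ℕ) < j → cyclePerm n j ℓ x = x := by
      intro x hx
      rw [cyclePerm_apply hj hℓn']
      exact dif_neg (by omega)
    have hstep : ∀ (x : ℕ) (hx : x < n) (h1 : j ≤ x) (h2 : x < ℓ),
        cyclePerm n j ℓ ⟨x, hx⟩ = ⟨x + 1, by omega⟩ := by
      intro x hx h1 h2
      rw [cyclePerm_apply hj hℓn', dif_pos (⟨h1, by omega⟩ : j ≤ x ∧ x ≤ ℓ), dif_neg (show ¬(x = ℓ) by omega)]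
    have hlast : cyclePerm n j ℓ ⟨ℓ, hℓn'⟩ = ⟨j, by omega⟩ := by
      rw [cyclePerm_apply hj hℓn', dif_pos (⟨hj, le_rfl⟩ : j ≤ ℓ ∧ ℓ ≤ ℓ), dif_pos (rfl : ℓ = ℓ)]
    have hinv : ∀ x y : Fin n, cyclePerm n j ℓ y = x → (cyclePerm n j ℓ)⁻¹ x = y := by
      intro x y hxy
      rw [← hxy]
      simp
    -- normalize the shape of b
    have hshape :
        (∃ h : H, (h ∈ X_H ∨ h⁻¹ ∈ X_H) ∧ b = eSlot (⟨0, hn⟩ : Fin n) h) ∨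
        (∃ a b' : Fin n, (b' : ℕ) = (a : ℕ) + 1 ∧ (b' : ℕ) < ℓ + 1 ∧
            b = pPerm (Equiv.swap a b')) := by
      rcases hb with hb | hb
      · rcases hb with ⟨h, hX, rfl⟩ | ⟨a, b', hab, hbl, rfl⟩
        · exact Or.inl ⟨h, Or.inl hX, rfl⟩
        · exact Or.inr ⟨a, b', hab, hbl, rfl⟩
      · rw [Set.mem_inv] at hb
        rcases hb with ⟨h, hX, hb⟩ | ⟨a, b', hab, hbl, hb⟩
        · exact Or.inl ⟨h⁻¹, Or.inr (by simpa using hX),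
            by rw [← inv_inv b, hb, eSlot_inv]⟩
        · exact Or.inr ⟨a, b', hab, hbl,
            by rw [← inv_inv b, hb, pPerm_inv, Equiv.swap_inv]⟩
    rcases hshape with ⟨h, hX, rfl⟩ | ⟨a, b', hab, hbl, rfl⟩
    · -- b = eSlot 0 h
      right
      rw [conj_eSlot]
      by_cases hj0 : j = 0
      · subst hj0
        have h0 : (cyclePerm n 0 ℓ)⁻¹ ⟨0, hn⟩ = ⟨ℓ, hℓn'⟩ := hinv _ _ hlast
        rw [h0]
        exact Or.inl (Or.inr ⟨h, rfl⟩)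
      · have h0 : (cyclePerm n j ℓ)⁻¹ ⟨0, hn⟩ = ⟨0, hn⟩ :=
          hinv _ _ (hfix ⟨0, hn⟩ (show (0:ℕ) < j by omega))
        rw [h0]
        rcases hX with hX | hX
        · exact Or.inl (Or.inl (Or.inl ⟨h, hX, rfl⟩))
        · refine Or.inr ?_
          rw [Set.mem_inv, eSlot_inv]
          exact Or.inl (Or.inl ⟨h⁻¹, hX, rfl⟩)
    · -- b = pPerm (swap a b')
      rcases lt_trichotomy (b' : ℕ) j with hlt | heq | hgt
      · -- b' < j : swap is disjoint from the cycle
        right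
        rw [conj_pPerm, conj_swap, hinv _ _ (hfix a (by omega)),
          hinv _ _ (hfix b' (by omega))]
        exact Or.inl (Or.inl (Or.inr ⟨a, b', hab, by omega, rfl⟩))
      · -- b' = j : b * c is the longer cycle starting at a
        left
        obtain rfl : j = (a : ℕ) + 1 := by omega
        rw [pPerm_mul]
        refine ⟨(a : ℕ), by omega, ?_⟩
        congr 1
        have hbe : b' = (⟨(a : ℕ) + 1, by omega⟩ : Fin n) := Fin.ext hab
        rw [hbe]
        exact swap_cyclePerm (by omega) hℓn'
      · rcases Nat.eq_or_lt_of_le (show j ≤ (a : ℕ) by omega) with heq2 | hlt2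
        · -- a = j : b * c is the shorter cycle starting at a+1
          left
          obtain rfl : j = (a : ℕ) := heq2
          rw [pPerm_mul]
          refine ⟨(a : ℕ) + 1, by omega, ?_⟩
          congr 1
          have hbe : b' = (⟨(a : ℕ) + 1, by omega⟩ : Fin n) := Fin.ext hab
          rw [hbe]
          exact swap_cyclePerm' (by omega) hℓn'
        · -- j < a : conjugate is the swap shifted down by one
          right
          have h1 : (cyclePerm n j ℓ)⁻¹ a = ⟨(a : ℕ) - 1, by omega⟩ := by
            refine hinv _ _ ?_
            rw [hstep ((a : ℕ) - 1) (by omega) (by omega) (by omega)]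
            exact Fin.ext (by simp; omega)
          have h2 : (cyclePerm n j ℓ)⁻¹ b' = a := by
            refine hinv _ _ ?_
            have ha' : a = (⟨(a : ℕ), a.isLt⟩ : Fin n) := Fin.ext rfl
            rw [ha', hstep (a : ℕ) a.isLt (by omega) (by omega)]
            exact Fin.ext (by simp; omega)
          rw [conj_pPerm, conj_swap, h1, h2]
          exact Or.inl (Or.inl (Or.inr ⟨⟨(a : ℕ) - 1, by omega⟩, a,
            by simp; omega, by omega, rfl⟩))
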